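/- Let a ∈ ℚ, c = -a - a², f(x) = x² + c, and p a prime. Then v_p(a) < 0 if and only if v_p(f^n(0) - a) < 0 for some n ≥ 1, and in that case v_p(f^n(0) - a) < 0 for all n ≥ 1. -/

import Mathlib

private lemma val_add_nonneg (p : ℕ) [Fact p.Prime] {q r : ℚ}
    (hq : 0 ≤ padicValRat p q) (hr : 0 ≤ padicValRat p r) :
    0 ≤ padicValRat p (q + r) := by
  by_cases h : q + r = 0
  · rw [h, padicValRat.zero]
  · exact le_trans (le_min hq hr) (padicValRat.min_le_padicValRat_add h)

private lemma val_sq_nonneg (p : ℕ) [Fact p.Prime] {q : ℚ}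
    (hq : 0 ≤ padicValRat p q) : 0 ≤ padicValRat p (q ^ 2) := by
  by_cases h : q = 0
  · simp [h, padicValRat.zero]
  · rw [padicValRat.pow q]; positivity

theorem stmt6 (p : ℕ) (hp : p.Prime) (a : ℚ) (c : ℚ) (hc : c = -a - a^2)
    (f : ℚ → ℚ) (hf : ∀ x, f x = x^2 + c) :
    (padicValRat p a < 0 ↔ ∃ n : ℕ, 1 ≤ n ∧ padicValRat p (f^[n] 0 - a) < 0) ∧
    (padicValRat p a < 0 → ∀ n : ℕ, 1 ≤ n → padicValRat p (f^[n] 0 - a) < 0) := by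
  haveI : Fact p.Prime := ⟨hp⟩
  set v := padicValRat p a with hv
  -- Case v < 0: valuations of iterates
  have key_neg : v < 0 → ∀ n : ℕ, 1 ≤ n →
      f^[n] 0 ≠ 0 ∧ padicValRat p (f^[n] 0) = 2 ^ n * v := by
    intro hva
    have ha0 : a ≠ 0 := by
      intro h; rw [hv, h, padicValRat.zero] at hva; exact lt_irrefl 0 hva
    have hva2 : padicValRat p (-a ^ 2) = 2 * v := by
      rw [padicValRat.neg, padicValRat.pow a]; norm_num; exact hv.symm
    have hane : a ≠ -1 := by
      intro h; rw [hv, h] at hva; simp [padicValRat.neg, padicValRat.one] at hva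
    have hc0 : c ≠ 0 := by
      intro h
      rw [hc] at h
      have : -a * (1 + a) = 0 := by ring_nf; linarith [h]
      rcases mul_eq_zero.1 this with h1 | h2
      · exact ha0 (by linarith [neg_eq_zero.1 h1])
      · exact hane (by linarith)
    have hvc : padicValRat p c = 2 * v := by
      have hcc : c = -a ^ 2 + -a := by rw [hc]; ring
      rw [hcc]
      rw [padicValRat.add_eq_of_lt (by rw [← hcc]; exact hc0)
        (by intro h; simp at h; exact ha0 h) (neg_ne_zero.2 ha0)
        (by rw [hva2, padicValRat.neg, ← hv]; linarith)]
      exact hva2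
    intro n hn
    induction n with
    | zero => omega
    | succ m ih =>
      by_cases hm : 1 ≤ m
      · obtain ⟨hx0, hxv⟩ := ih hm
        set x := f^[m] 0 with hx
        have hstep : f^[m+1] 0 = x ^ 2 + c := by
          rw [Function.iterate_succ_apply', hf]
        have hvx2 : padicValRat p (x ^ 2) = 2 ^ (m+1) * v := by
          rw [padicValRat.pow x, hxv]; ring
        have hlt : padicValRat p (x ^ 2) < padicValRat p c := by
          rw [hvx2, hvc]
          have h2 : (2 : ℤ) < 2 ^ (m + 1) := by
            calc (2:ℤ) < 4 := by norm_num
            _ = 2 ^ 2 := by norm_num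
            _ ≤ 2 ^ (m+1) := pow_le_pow_right₀ (by norm_num) (by omega)
          nlinarith
        have hne : x ^ 2 + c ≠ 0 := by
          intro h
          have : x ^ 2 = -c := by linarith [h]
          rw [this, padicValRat.neg] at hlt
          exact lt_irrefl _ hlt
        refine ⟨by rw [hstep]; exact hne, ?_⟩
        rw [hstep, padicValRat.add_eq_of_lt hne (pow_ne_zero 2 hx0) hc0 hlt, hvx2]
      · have hm0 : m = 0 := by omega
        subst hm0
        have h1 : f^[1] 0 = c := by
          simp [Function.iterate_one, hf]
        exact ⟨by rw [h1]; exact hc0, by rw [h1, hvc]; ring⟩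
  have forward : v < 0 → ∀ n : ℕ, 1 ≤ n → padicValRat p (f^[n] 0 - a) < 0 := by
    intro hva n hn
    obtain ⟨hx0, hxv⟩ := key_neg hva n hn
    have ha0 : a ≠ 0 := by
      intro h; rw [hv, h, padicValRat.zero] at hva; exact lt_irrefl 0 hva
    have h2n : (2:ℤ) ≤ 2 ^ n := by
      calc (2:ℤ) = 2 ^ 1 := by norm_num
      _ ≤ 2 ^ n := pow_le_pow_right₀ (by norm_num) hn
    have hlt : padicValRat p (f^[n] 0) < padicValRat p (-a) := by
      rw [hxv, padicValRat.neg, ← hv]; nlinarith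
    have hne : f^[n] 0 + -a ≠ 0 := by
      intro h
      have : f^[n] 0 = a := by linarith [h]
      rw [this] at hlt
      rw [padicValRat.neg] at hlt
      exact lt_irrefl _ hlt
    have : padicValRat p (f^[n] 0 - a) = 2 ^ n * v := by
      rw [sub_eq_add_neg, padicValRat.add_eq_of_lt hne hx0 (neg_ne_zero.2 ha0) hlt, hxv]
    rw [this]; nlinarith
  have backward : 0 ≤ v → ∀ n : ℕ, 0 ≤ padicValRat p (f^[n] 0 - a) := by
    intro hva
    have hvc : 0 ≤ padicValRat p c := by
      have : c = -a + -(a ^ 2) := by rw [hc]; ring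
      rw [this]
      exact val_add_nonneg p (by rw [padicValRat.neg]; exact hva)
        (by rw [padicValRat.neg]; exact val_sq_nonneg p hva)
    have hit : ∀ n : ℕ, 0 ≤ padicValRat p (f^[n] 0) := by
      intro n
      induction n with
      | zero => simp [padicValRat.zero]
      | succ m ih =>
        rw [Function.iterate_succ_apply', hf]
        exact val_add_nonneg p (val_sq_nonneg p ih) hvc
    intro n
    rw [sub_eq_add_neg]
    exact val_add_nonneg p (hit n) (by rw [padicValRat.neg]; exact hva)
  constructor
  · constructor
    · intro hva; exact ⟨1, le_refl 1, forward hva 1 (le_refl 1)⟩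
    · rintro ⟨n, hn, hlt⟩
      by_contra h
      push_neg at h
      exact absurd hlt (not_lt.2 (backward h n))
  · exact forward
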